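/- In the discrimination setting, for every discrimination level δ ∈ (0,1): the impartial advisor's equilibrium test allocation is τ₂*(0, δ) = 1/2 (hence the equal split (1/2, 1/2)), independently of δ; and the impartial advisor maximizes welfare among all advisors: W(0, δ) ≥ W(p, δ) for every partiality level p ∈ [0,1). -/
import Mathlib


noncomputable section

/-! Discrimination setting (Section 5.2 of the paper): `K = 2`, prior means `0`,
prior variances `Σ⁰₁ = Σ⁰₂ = 1`, budget `T = 1`.  For discrimination level
`δ ∈ (0,1)` the politician's weights are `((1+δ)/2, (1−δ)/2)`; for partiality
level `p ∈ [0,1)` the advisor's weights are `((1−p)/2, (1+p)/2)`.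

* `ah1 p δ, ah2 p δ` are the auxiliary weights `α̂₁(p,δ), α̂₂(p,δ)`.
* `tau2aux p δ` is `τ₂^aux(p,δ)` and `tau2star p δ = min{τ₂^aux(p,δ), 1}` is the
  advisor's equilibrium allocation of tests to group 2 (group 1 gets the rest).
* `omega τ₂ δ` is utilitarian welfare as a function of the allocation, and
  `W p δ = ω(τ₂*(p,δ), δ)` is equilibrium welfare.
* `Dlt τ₂ δ` is the difference of the two groups' ex ante expected utilities and
  `Ineq p δ = |Δ(τ₂*(p,δ), δ)|` is equilibrium inequality. -/

/-- Auxiliary weight `α̂₁(p,δ)`. -/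
def ah1 (p δ : ℝ) : ℝ :=
  if p < (1 - δ) / 2 then (1 / 2) * Real.sqrt ((1 + δ) * (1 - 2 * p - δ)) else 0

/-- Auxiliary weight `α̂₂(p,δ)`. -/
def ah2 (p δ : ℝ) : ℝ := (1 / 2) * Real.sqrt ((1 - δ) * (1 + 2 * p + δ))

/-- `τ₂^aux(p,δ)`. -/
def tau2aux (p δ : ℝ) : ℝ := (2 * ah2 p δ - ah1 p δ) / (ah1 p δ + ah2 p δ)

/-- The advisor's equilibrium allocation of tests to group 2, `τ₂*(p,δ)`. -/
def tau2star (p δ : ℝ) : ℝ := min (tau2aux p δ) 1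

/-- Utilitarian welfare `ω(τ₂, δ)` from splitting the budget as `(1−τ₂, τ₂)`. -/
def omega (τ2 δ : ℝ) : ℝ :=
  -3 - δ ^ 2 + ((1 + δ) ^ 2 / 2 + (1 + δ) * (1 - τ2)) / (2 - τ2)
    + ((1 - δ) ^ 2 / 2 + (1 - δ) * τ2) / (1 + τ2)

/-- Equilibrium welfare `W(p,δ)`. -/
def W (p δ : ℝ) : ℝ := omega (tau2star p δ) δ

/-- Difference `Δ(τ₂,δ)` of the two groups' ex ante expected utilities. -/
def Dlt (τ2 δ : ℝ) : ℝ :=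
  (1 + δ) * (1 - τ2) / (2 - τ2) - (1 - δ) * τ2 / (1 + τ2)

/-- Equilibrium inequality `I(p,δ)`. -/
def Ineq (p δ : ℝ) : ℝ := |Dlt (tau2star p δ) δ|

lemma omega_le_half (δ t : ℝ) (hδ0 : 0 < δ) (hδ1 : δ < 1) (ht0 : 0 ≤ t)
    (ht1 : t ≤ 1) : omega t δ ≤ omega (1/2) δ := by
  unfold omega
  have h2t : (0:ℝ) < 2 - t := by linarith
  have h1t : (0:ℝ) < 1 + t := by linarith
  have key : ((1 + δ) ^ 2 / 2 + (1 + δ) * (1 - t)) / (2 - t)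
      + ((1 - δ) ^ 2 / 2 + (1 - δ) * t) / (1 + t) ≤ (4 + 2 * δ ^ 2) / 3 := by
    rw [div_add_div _ _ h2t.ne' h1t.ne',
      div_le_div_iff₀ (by positivity) (by norm_num)]
    nlinarith [mul_nonneg (sq_nonneg (2*t - 1))
      (mul_nonneg (by linarith : (0:ℝ) ≤ 1 - δ) (by linarith : (0:ℝ) ≤ 1 + δ))]
  have e : ((1 + δ) ^ 2 / 2 + (1 + δ) * (1 - 1/2)) / (2 - 1/2)
      + ((1 - δ) ^ 2 / 2 + (1 - δ) * (1/2)) / (1 + 1/2) = (4 + 2 * δ ^ 2) / 3 := by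
    ring
  linarith

lemma ah2_pos (p δ : ℝ) (hp0 : 0 ≤ p) (hδ0 : 0 < δ) (hδ1 : δ < 1) :
    0 < ah2 p δ := by
  unfold ah2
  have : (0:ℝ) < (1 - δ) * (1 + 2 * p + δ) := by
    apply mul_pos <;> linarith
  have := Real.sqrt_pos.mpr this
  linarith

lemma ah1_le_ah2 (p δ : ℝ) (hp0 : 0 ≤ p) (hδ0 : 0 < δ) (hδ1 : δ < 1) :
    ah1 p δ ≤ ah2 p δ := by
  unfold ah1 ah2
  split_ifs with h
  · have : (1 + δ) * (1 - 2 * p - δ) ≤ (1 - δ) * (1 + 2 * p + δ) := by nlinarith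
    have := Real.sqrt_le_sqrt this
    linarith
  · have := Real.sqrt_nonneg ((1 - δ) * (1 + 2 * p + δ))
    linarith

lemma ah1_nonneg (p δ : ℝ) : 0 ≤ ah1 p δ := by
  unfold ah1
  split_ifs with h
  · have := Real.sqrt_nonneg ((1 + δ) * (1 - 2 * p - δ))
    linarith
  · exact le_refl 0
  
lemma tau2star_mem (p δ : ℝ) (hp0 : 0 ≤ p) (hδ0 : 0 < δ) (hδ1 : δ < 1) :
    0 ≤ tau2star p δ ∧ tau2star p δ ≤ 1 := by
  have hb := ah2_pos p δ hp0 hδ0 hδ1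
  have ha := ah1_nonneg p δ
  have hab := ah1_le_ah2 p δ hp0 hδ0 hδ1
  have hden : 0 < ah1 p δ + ah2 p δ := by linarith
  constructor
  · apply le_min _ (by norm_num)
    unfold tau2aux
    rw [le_div_iff₀ hden]
    linarith
  · exact min_le_right _ _

/-- Lemma 1 of the paper.  For every discrimination level `δ`,
the impartial advisor (`p = 0`) chooses the equal split independent of `δ`, and
maximizes welfare among all advisors. -/
theorem stmt_10 (δ : ℝ) (hδ : δ ∈ Set.Ioo (0 : ℝ) 1) :
    tau2star 0 δ = 1 / 2 ∧ ∀ p ∈ Set.Ico (0 : ℝ) 1, W p δ ≤ W 0 δ := by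
  obtain ⟨hδ0, hδ1⟩ := hδ
  have hb := ah2_pos 0 δ le_rfl hδ0 hδ1
  have hEq : ah1 0 δ = ah2 0 δ := by
    unfold ah1 ah2
    rw [if_pos (by linarith)]
    congr 1
    ring
  have hstar : tau2star 0 δ = 1 / 2 := by
    unfold tau2star tau2aux
    rw [hEq]
    rw [min_eq_left]
    · rw [div_eq_iff (by linarith)]; ring
    · rw [div_le_one (by linarith)]; linarith
  refine ⟨hstar, fun p hp => ?_⟩
  obtain ⟨hp0, hp1⟩ := hp
  obtain ⟨h0, h1⟩ := tau2star_mem p δ hp0 hδ0 hδ1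
  unfold W
  rw [hstar]
  exact omega_le_half δ _ hδ0 hδ1 h0 h1
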